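/- Let T, S be closed densely defined operators with S∘T = 0 on Hilbert spaces, let □ = T T* + S* S be the associated self-adjoint Laplacian with bounded inverse G on the orthogonal complement of its kernel, extended by 0 on the kernel. If φ satisfies Sφ = 0 and φ ⊥ ker □ (= ker S ∩ ker T*), then φ = T T* G φ; that is, S*S G φ = 0 and u = T* G φ solves T u = φ. -/
import Mathlib


open scoped InnerProductSpace

/-- **Canonical solution operator via the Green operator.**
Let `T : H₁ → H₂`, `S : H₂ → H₃` be closed densely defined operators with
`S ∘ T = 0`, both with closed range, let `□ = T T* + S* S` have
finite-dimensional kernel `Ker = ker S ∩ ker T*` and Green operator `G`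
(so `□ G φ = φ` for `φ ⊥ Ker`, and `G = 0` on `Ker`).  If `S φ = 0` and
`φ ⊥ Ker`, then `S* S G φ = 0` and `u = T* G φ` solves `T u = φ`, i.e.
`φ = T T* G φ`. -/
theorem stmt7
    {H₁ H₂ H₃ : Type*}
    [NormedAddCommGroup H₁] [InnerProductSpace ℂ H₁] [CompleteSpace H₁]
    [NormedAddCommGroup H₂] [InnerProductSpace ℂ H₂] [CompleteSpace H₂]
    [NormedAddCommGroup H₃] [InnerProductSpace ℂ H₃] [CompleteSpace H₃]
    (T : H₁ →ₗ.[ℂ] H₂) (S : H₂ →ₗ.[ℂ] H₃)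
    (hTc : T.IsClosed) (hSc : S.IsClosed)
    (hTd : Dense (T.domain : Set H₁)) (hSd : Dense (S.domain : Set H₂))
    (hST : ∀ x (hx : x ∈ T.domain), ∃ h : T ⟨x, hx⟩ ∈ S.domain,
      S ⟨T ⟨x, hx⟩, h⟩ = 0)
    (hTr : IsClosed (Set.range fun x : T.domain => T x))
    (hSr : IsClosed (Set.range fun x : S.domain => S x))
    (Ker : Submodule ℂ H₂)
    (hKer : (Ker : Set H₂) =
      {ψ | ∃ (hs : ψ ∈ S.domain) (ht : ψ ∈ T.adjoint.domain),
        S ⟨ψ, hs⟩ = 0 ∧ T.adjoint ⟨ψ, ht⟩ = 0})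
    (hfin : FiniteDimensional ℂ Ker)
    (G : H₂ →L[ℂ] H₂)
    (hG0 : ∀ ψ ∈ Ker, G ψ = 0)
    (hGreen : ∀ φ : H₂, (∀ ψ ∈ Ker, ⟪φ, ψ⟫_ℂ = 0) →
      ∃ (h1 : G φ ∈ T.adjoint.domain) (h2 : T.adjoint ⟨G φ, h1⟩ ∈ T.domain)
        (h3 : G φ ∈ S.domain) (h4 : S ⟨G φ, h3⟩ ∈ S.adjoint.domain),
        T ⟨T.adjoint ⟨G φ, h1⟩, h2⟩ + S.adjoint ⟨S ⟨G φ, h3⟩, h4⟩ = φ) :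
    ∀ φ (hφS : φ ∈ S.domain), S ⟨φ, hφS⟩ = 0 → (∀ ψ ∈ Ker, ⟪φ, ψ⟫_ℂ = 0) →
      ∀ (h1 : G φ ∈ T.adjoint.domain) (h2 : T.adjoint ⟨G φ, h1⟩ ∈ T.domain)
        (h3 : G φ ∈ S.domain) (h4 : S ⟨G φ, h3⟩ ∈ S.adjoint.domain),
        S.adjoint ⟨S ⟨G φ, h3⟩, h4⟩ = 0 ∧
        T ⟨T.adjoint ⟨G φ, h1⟩, h2⟩ = φ :=  by
  intro φ hφS hSφ hφK h1 h2 h3 h4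
  obtain ⟨h1', h2', h3', h4', hsum⟩ := hGreen φ hφK
  set a : H₂ := T ⟨T.adjoint ⟨G φ, h1⟩, h2⟩ with ha
  set b : H₂ := S.adjoint ⟨S ⟨G φ, h3⟩, h4⟩ with hb
  have hsum' : a + b = φ := hsum
  have hbφ : ⟪b, φ⟫_ℂ = 0 := by
    have h := LinearPMap.adjoint_isFormalAdjoint hSd
      (⟨S ⟨G φ, h3⟩, h4⟩ : S.adjoint.domain) (⟨φ, hφS⟩ : S.domain)
    rw [hSφ, inner_zero_right] at h
    exact h
  have hba : ⟪b, a⟫_ℂ = 0 := by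
    obtain ⟨hmem, h0⟩ := hST _ h2
    have h := LinearPMap.adjoint_isFormalAdjoint hSd
      (⟨S ⟨G φ, h3⟩, h4⟩ : S.adjoint.domain) (⟨a, hmem⟩ : S.domain)
    rw [h0, inner_zero_right] at h
    exact h
  have hbb : ⟪b, b⟫_ℂ = 0 := by
    have : ⟪b, a + b⟫_ℂ = ⟪b, φ⟫_ℂ := by rw [hsum']
    rw [inner_add_right, hba, zero_add, hbφ] at this
    exact this
  have hb0 : b = 0 := inner_self_eq_zero.mp hbb
  refine ⟨hb0, ?_⟩
  have : a = φ := by rw [← hsum', hb0, add_zero]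
  exact this
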